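/- arXiv:1701.01470 — 3 statements merged into one kernel-verified Lean document; each statement's English description precedes it below -/
import Mathlib

section
/- Let λ(q) = x·log q − μ(q−1) with x > μ > 0. Define q^max > 1 to be the unique root of λ on (1,∞), and q^mle = x/μ. Then q^mle − 1 < (q^max − 1)/2. -/
lemma key_ineq {q : ℝ} (hq : 1 < q) : 2 * (q - 1) / (q + 1) < Real.log q := by
  set f : ℝ → ℝ := fun t => Real.log t - 2 * (t - 1) / (t + 1) with hf
  have hmono : StrictMonoOn f (Set.Ici 1) := by
    apply strictMonoOn_of_deriv_pos (convex_Ici 1)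
    · apply ContinuousOn.sub
      · exact Real.continuousOn_log.mono (by intro t ht; simp at ht ⊢; linarith)
      · apply ContinuousOn.div
        · fun_prop
        · fun_prop
        · intro t ht; simp at ht; intro h; linarith
    · intro t ht
      rw [interior_Ici] at ht
      have ht1 : (1:ℝ) < t := ht
      have h0 : t ≠ 0 := by linarith
      have h1 : t + 1 ≠ 0 := by linarith
      have hd : HasDerivAt f (1/t - 4/(t+1)^2) t := by
        have hlog := Real.hasDerivAt_log h0
        have hnum : HasDerivAt (fun t : ℝ => 2 * (t - 1)) 2 t := by
          simpa using ((hasDerivAt_id t).sub_const 1).const_mul 2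
        have hden : HasDerivAt (fun t : ℝ => t + 1) 1 t := (hasDerivAt_id t).add_const 1
        have hdiv := hnum.div hden h1
        have hsub := hlog.sub hdiv
        refine hsub.congr_deriv ?_
        rw [one_div]
        congr 1
        rw [div_eq_div_iff (pow_ne_zero 2 h1) (pow_ne_zero 2 h1)]
        ring
      rw [hd.deriv]
      have heq : 1/t - 4/(t+1)^2 = (t-1)^2 / (t * (t+1)^2) := by
        field_simp; ring
      rw [heq]
      apply div_pos
      · have : t - 1 > 0 := by linarith
        positivity
      · have : (0:ℝ) < t := by linarith
        positivity
  have h01 := hmono (Set.self_mem_Ici) (Set.mem_Ici.mpr hq.le) hq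
  simp only [hf, Real.log_one] at h01
  norm_num at h01
  linarith

theorem poisson_excess_risk_lt_half (x μ qmax : ℝ) (hμ : 0 < μ) (hx : μ < x)
    (hq : 1 < qmax) (hroot : x * Real.log qmax - μ * (qmax - 1) = 0) :
    x / μ - 1 < (qmax - 1) / 2 := by
  have hx0 : 0 < x := lt_trans hμ hx
  have hq2 : (0:ℝ) < qmax + 1 := by linarith
  have hq1 : (0:ℝ) < qmax - 1 := by linarith
  have hkey := key_ineq hq
  have hk2 : 2 * (qmax - 1) < Real.log qmax * (qmax + 1) := (div_lt_iff₀ hq2).mp hkey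
  have h2 : x * Real.log qmax = μ * (qmax - 1) := by linarith
  have h4 : x * (2 * (qmax - 1)) < x * (Real.log qmax * (qmax + 1)) :=
    (mul_lt_mul_iff_right₀ hx0).mpr hk2
  have h5 : 2 * x < μ * (qmax + 1) := by nlinarith [h4, h2, hq1]
  have h6 : x / μ < (qmax + 1) / 2 := by
    rw [div_lt_div_iff₀ hμ (by norm_num : (0:ℝ) < 2)]
    linarith
  linarith
end

section
/- (Linear-time subset scanning structure for Poisson) Order the nodes by priority G(v_i) = x_i/μ_i in decreasing order. Then for the Poisson score F(S) = C log(C/B) + B − C (with C = Σ_{i∈S} x_i, B = Σ_{i∈S} μ_i, and F(S)=0 for C ≤ B), some prefix {v_(1), …, v_(k)} of the priority ordering achieves the maximum of F over all subsets S. -/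
open Finset

theorem ltss_poisson {n : ℕ} (x μ : Fin n → ℝ)
    (hx : ∀ i, 0 ≤ x i) (hμ : ∀ i, 0 < μ i)
    (hsorted : ∀ i j : Fin n, i ≤ j → x j / μ j ≤ x i / μ i)
    (F : Finset (Fin n) → ℝ)
    (hF : ∀ S : Finset (Fin n), F S =
      if (∑ i ∈ S, μ i) < (∑ i ∈ S, x i) then
        (∑ i ∈ S, x i) * Real.log ((∑ i ∈ S, x i) / (∑ i ∈ S, μ i))
          + (∑ i ∈ S, μ i) - (∑ i ∈ S, x i)
      else 0) :
    ∃ k : ℕ, k ≤ n ∧ ∀ S : Finset (Fin n),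
      F S ≤ F (Finset.univ.filter (fun i : Fin n => (i : ℕ) < k)) := by
  obtain ⟨S₀, -, hS₀⟩ :=
    Finset.exists_max_image (univ : Finset (Finset (Fin n))) F ⟨∅, mem_univ _⟩
  have hS₀' : ∀ S : Finset (Fin n), F S ≤ F S₀ := fun S => hS₀ S (mem_univ S)
  by_cases hcase : (∑ i ∈ S₀, μ i) < (∑ i ∈ S₀, x i)
  · -- main case: the maximizer has positive score
    set C := ∑ i ∈ S₀, x i with hCdef
    set B := ∑ i ∈ S₀, μ i with hBdef
    have hS₀ne : S₀.Nonempty := by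
      rcases S₀.eq_empty_or_nonempty with h | h
      · exfalso; rw [hCdef, hBdef, h] at hcase; simp at hcase
      · exact h
    have hB : 0 < B := Finset.sum_pos (fun i _ => hμ i) hS₀ne
    have hC : 0 < C := hB.trans hcase
    set q : ℝ := C / B with hq
    have hq1 : (1 : ℝ) < q := (one_lt_div hB).2 hcase
    have hq0 : (0 : ℝ) < q := by linarith
    have hlq : 0 < Real.log q := Real.log_pos hq1
    set ℓ : Fin n → ℝ := fun i => x i * Real.log q - μ i * (q - 1) with hℓ
    -- downward closedness of {i | 0 ≤ ℓ i}
    have dcl : ∀ i j : Fin n, i ≤ j → 0 ≤ ℓ j → 0 ≤ ℓ i := by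
      intro i j hij hj
      have hratio := hsorted i j hij
      have h1 : (q - 1) / Real.log q ≤ x j / μ j := by
        rw [div_le_div_iff₀ hlq (hμ j)]
        simp only [hℓ] at hj; nlinarith
      have h2 : (q - 1) / Real.log q ≤ x i / μ i := le_trans h1 hratio
      rw [div_le_div_iff₀ hlq (hμ i)] at h2
      simp only [hℓ]; nlinarith
    set T : Finset (Fin n) := univ.filter (fun i => 0 ≤ ℓ i) with hT
    refine ⟨T.card, le_trans (card_le_univ T) (by simp), ?_⟩
    -- the prefix of length T.card is exactly T
    have hpref : univ.filter (fun i : Fin n => (i : ℕ) < T.card) = T := by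
      ext i
      simp only [mem_filter, mem_univ, true_and]
      constructor
      · intro hi
        by_contra hni
        have hsub : T ⊆ Finset.Iio i := by
          intro j hj
          rw [Finset.mem_Iio]
          by_contra hji
          exact hni (mem_filter.2 ⟨mem_univ _, dcl i j (le_of_not_gt hji) ((mem_filter.1 hj).2)⟩)
        have := Finset.card_le_card hsub
        rw [Fin.card_Iio] at this
        omega
      · intro hi
        have hsub : Finset.Iic i ⊆ T := by
          intro j hj
          rw [Finset.mem_Iic] at hj
          exact mem_filter.2 ⟨mem_univ _, dcl j i hj ((mem_filter.1 hi).2)⟩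
        have := Finset.card_le_card hsub
        rw [Fin.card_Iic] at this
        omega
    rw [hpref]
    -- score of S₀ in linear form
    have hBq : B * q = C := by rw [hq]; field_simp
    have hsumS₀ : ∑ i ∈ S₀, ℓ i = C * Real.log q - B * (q - 1) := by
      simp only [hℓ, Finset.sum_sub_distrib, ← Finset.sum_mul]
      rfl
    have hFS₀ : F S₀ = ∑ i ∈ S₀, ℓ i := by
      rw [hF S₀, if_pos hcase, hsumS₀]
      simp only [← hCdef, ← hBdef, ← hq]
      linear_combination hBq
    -- sum over S₀ ≤ sum over T
    have hsum1 : ∑ i ∈ S₀, ℓ i ≤ ∑ i ∈ T, ℓ i := by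
      have hstep1 : ∑ i ∈ S₀, ℓ i ≤ ∑ i ∈ S₀.filter (fun i => 0 ≤ ℓ i), ℓ i := by
        have hsplit := Finset.sum_filter_add_sum_filter_not S₀ (fun i => 0 ≤ ℓ i) ℓ
        have hneg : ∑ i ∈ S₀.filter (fun i => ¬ 0 ≤ ℓ i), ℓ i ≤ 0 :=
          Finset.sum_nonpos (fun i hi => le_of_lt (lt_of_not_ge (mem_filter.1 hi).2))
        linarith
      refine le_trans hstep1 (Finset.sum_le_sum_of_subset_of_nonneg ?_ ?_)
      · exact Finset.filter_subset_filter _ (Finset.subset_univ S₀)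
      · intro i hi _
        exact (mem_filter.1 hi).2
    -- sum over T ≤ F T
    set CT := ∑ i ∈ T, x i with hCT
    set BT := ∑ i ∈ T, μ i with hBT
    have hsumT : ∑ i ∈ T, ℓ i = CT * Real.log q - BT * (q - 1) := by
      simp only [hℓ, Finset.sum_sub_distrib, ← Finset.sum_mul]
      rfl
    have hlog_le : Real.log q ≤ q - 1 := by
      have := Real.log_le_sub_one_of_pos hq0
      linarith
    have hsum2 : ∑ i ∈ T, ℓ i ≤ F T := by
      rw [hF T, hsumT]
      by_cases hTcase : BT < CT
      · rw [if_pos hTcase]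
        have hTne : T.Nonempty := by
          rcases T.eq_empty_or_nonempty with h | h
          · exfalso; rw [hCT, hBT, h] at hTcase; simp at hTcase
          · exact h
        have hBT0 : 0 < BT := Finset.sum_pos (fun i _ => hμ i) hTne
        have hCT0 : 0 < CT := hBT0.trans hTcase
        -- key: CT * log q ≤ CT * log (CT/BT) + q*BT - CT
        have hkey : Real.log (q * BT / CT) ≤ q * BT / CT - 1 :=
          Real.log_le_sub_one_of_pos (by positivity)
        have hlogsplit : Real.log (q * BT / CT) =
            Real.log q - Real.log (CT / BT) := by
          rw [Real.log_div (by positivity) (ne_of_gt hCT0),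
            Real.log_mul (ne_of_gt hq0) (ne_of_gt hBT0),
            Real.log_div (ne_of_gt hCT0) (ne_of_gt hBT0)]
          ring
        rw [hlogsplit] at hkey
        have h3 : CT * (Real.log q - Real.log (CT / BT)) ≤ CT * (q * BT / CT - 1) :=
          mul_le_mul_of_nonneg_left hkey (le_of_lt hCT0)
        have h4 : CT * (q * BT / CT - 1) = q * BT - CT := by field_simp
        nlinarith
      · rw [if_neg hTcase]
        push_neg at hTcase
        have hCT0 : 0 ≤ CT := Finset.sum_nonneg (fun i _ => hx i)
        have hBT0 : 0 ≤ BT := le_trans hCT0 hTcase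
        nlinarith
    intro S
    calc F S ≤ F S₀ := hS₀' S
      _ = ∑ i ∈ S₀, ℓ i := hFS₀
      _ ≤ ∑ i ∈ T, ℓ i := hsum1
      _ ≤ F T := hsum2
  · -- the maximum is 0: the empty prefix works
    refine ⟨0, Nat.zero_le n, fun S => ?_⟩
    have hempty : univ.filter (fun i : Fin n => (i : ℕ) < 0) = (∅ : Finset (Fin n)) := by
      ext i; simp
    rw [hempty]
    have hF0 : F (∅ : Finset (Fin n)) = 0 := by rw [hF]; simp
    have hFS₀0 : F S₀ = 0 := by rw [hF S₀, if_neg hcase]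
    rw [hF0]
    calc F S ≤ F S₀ := hS₀' S
      _ = 0 := hFS₀0
end

section
/- (Lemma 1, Gaussian case) Let each node i have observed excess risk g_i = x_i/μ_i − 1, let S^T be the affected set, and define r_min^aff = min_{i∈S^T} g_i, r_max^aff = max_{i∈S^T} g_i, r_max^unaff = max_{i∉S^T} g_i. For the Gaussian score (where excess-risk map satisfies r^mle = r^max/2), if the signal is 2-homogeneous (r_max^aff < 2·r_min^aff) and 1-strong (r_min^aff > r_max^unaff), then the highest-scoring unconstrained subset S* satisfies S* ⊇ S^T. -/
private lemma quad_mem_le (a b y t : ℝ) (hb : 0 < b) (h : y = a * t - b * t ^ 2 / 2) :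
    y ≤ a ^ 2 / (2 * b) := by
  rw [h, le_div_iff₀ (by linarith : (0:ℝ) < 2 * b)]
  nlinarith [sq_nonneg (a - b * t)]

private lemma aux1 (a b : ℝ) (hb : b ≠ 0) :
    a ^ 2 / (2 * b) = a * (1 + a / b - 1) - b * (1 + a / b - 1) ^ 2 / 2 := by
  field_simp; ring

private lemma aux2 (a b m gg : ℝ) (hb : b ≠ 0) :
    a ^ 2 / (2 * b) + m * (gg * (a / b) - (a / b) ^ 2 / 2) =
      (m * gg + a) * (1 + a / b - 1) - (m + b) * (1 + a / b - 1) ^ 2 / 2 := by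
  field_simp; ring

theorem lemma1_gaussian {V : Type*} [Fintype V] [DecidableEq V]
    (x μ : V → ℝ) (hμ : ∀ i, 0 < μ i)
    (ST : Finset V) (hSTne : ST.Nonempty)
    (F : Finset V → ℝ)
    (hF : ∀ S : Finset V, F S = sSup {y : ℝ | ∃ q : ℝ, 1 < q ∧
        y = ∑ i ∈ S, ((x i - μ i) * (q - 1) - μ i * (q - 1) ^ 2 / 2)})
    -- 2-homogeneous: r_max^aff < 2 · r_min^aff
    (hhom : ∀ i ∈ ST, ∀ j ∈ ST, x i / μ i - 1 < 2 * (x j / μ j - 1))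
    -- 1-strong: r_min^aff > r_max^unaff
    (hstrong : ∀ i ∈ ST, ∀ j ∉ ST, x j / μ j - 1 < x i / μ i - 1)
    (Sstar : Finset V) (hmax : ∀ S : Finset V, F S ≤ F Sstar) :
    ST ⊆ Sstar := by
  classical
  have hxg : ∀ i, x i - μ i = μ i * (x i / μ i - 1) := by
    intro i
    have hμi := (hμ i).ne'
    field_simp
  have hsplit : ∀ (S : Finset V) (q : ℝ),
      ∑ i ∈ S, ((x i - μ i) * (q - 1) - μ i * (q - 1) ^ 2 / 2) =
        (∑ i ∈ S, (x i - μ i)) * (q - 1) - (∑ i ∈ S, μ i) * (q - 1) ^ 2 / 2 := by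
    intro S q
    rw [Finset.sum_sub_distrib, ← Finset.sum_mul, ← Finset.sum_div, ← Finset.sum_mul]
  have hne : ∀ S : Finset V,
      ({y : ℝ | ∃ q : ℝ, 1 < q ∧
        y = ∑ i ∈ S, ((x i - μ i) * (q - 1) - μ i * (q - 1) ^ 2 / 2)}).Nonempty := by
    intro S
    exact ⟨_, 2, one_lt_two, rfl⟩
  have hbdd : ∀ S : Finset V, 0 < ∑ i ∈ S, μ i →
      BddAbove {y : ℝ | ∃ q : ℝ, 1 < q ∧
        y = ∑ i ∈ S, ((x i - μ i) * (q - 1) - μ i * (q - 1) ^ 2 / 2)} := by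
    intro S hS
    refine ⟨(∑ i ∈ S, (x i - μ i)) ^ 2 / (2 * ∑ i ∈ S, μ i), ?_⟩
    rintro y ⟨q, hq, rfl⟩
    rw [hsplit]
    exact quad_mem_le _ _ _ _ hS rfl
  have hub : ∀ S : Finset V, 0 < ∑ i ∈ S, μ i →
      F S ≤ (∑ i ∈ S, (x i - μ i)) ^ 2 / (2 * ∑ i ∈ S, μ i) := by
    intro S hS
    rw [hF]
    refine csSup_le (hne S) ?_
    rintro y ⟨q, hq, rfl⟩
    rw [hsplit]
    exact quad_mem_le _ _ _ _ hS rfl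
  have hgpos : ∀ i ∈ ST, 0 < x i / μ i - 1 := by
    intro i hi
    have := hhom i hi i hi
    linarith
  have hBpos : ∀ S : Finset V, S.Nonempty → 0 < ∑ i ∈ S, μ i :=
    fun S hS => Finset.sum_pos (fun i _ => hμ i) hS
  -- F ST > 0
  have haT : 0 < ∑ i ∈ ST, (x i - μ i) := by
    refine Finset.sum_pos (fun i hi => ?_) hSTne
    rw [hxg i]
    exact mul_pos (hμ i) (hgpos i hi)
  have hbT : 0 < ∑ i ∈ ST, μ i := hBpos ST hSTne
  have hFST : 0 < F ST := by
    have hmem : (∑ i ∈ ST, (x i - μ i)) ^ 2 / (2 * ∑ i ∈ ST, μ i) ∈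
        {y : ℝ | ∃ q : ℝ, 1 < q ∧
          y = ∑ i ∈ ST, ((x i - μ i) * (q - 1) - μ i * (q - 1) ^ 2 / 2)} := by
      refine ⟨1 + (∑ i ∈ ST, (x i - μ i)) / (∑ i ∈ ST, μ i),
        by have := div_pos haT hbT; linarith, ?_⟩
      rw [hsplit]
      exact aux1 _ _ hbT.ne'
    have h1 : (∑ i ∈ ST, (x i - μ i)) ^ 2 / (2 * ∑ i ∈ ST, μ i) ≤ F ST := by
      rw [hF]; exact le_csSup (hbdd ST hbT) hmem
    have h2 : 0 < (∑ i ∈ ST, (x i - μ i)) ^ 2 / (2 * ∑ i ∈ ST, μ i) := by positivity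
    linarith
  have hFS : 0 < F Sstar := lt_of_lt_of_le hFST (hmax ST)
  have ha : 0 < ∑ i ∈ Sstar, (x i - μ i) := by
    by_contra hcon
    push_neg at hcon
    have hb0 : 0 ≤ ∑ i ∈ Sstar, μ i :=
      Finset.sum_nonneg fun i _ => (hμ i).le
    have : F Sstar ≤ 0 := by
      rw [hF]
      refine csSup_le (hne Sstar) ?_
      rintro y ⟨q, hq, rfl⟩
      rw [hsplit]
      nlinarith [mul_nonneg hb0 (sq_nonneg (q - 1)),
        mul_nonpos_of_nonpos_of_nonneg hcon (by linarith : (0:ℝ) ≤ q - 1)]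
    linarith
  have hSne : Sstar.Nonempty := by
    rcases Finset.eq_empty_or_nonempty Sstar with h | h
    · rw [h] at ha; simp at ha
    · exact h
  have hb : 0 < ∑ i ∈ Sstar, μ i := hBpos Sstar hSne
  -- main argument
  intro i₀ hi₀
  by_contra hnot
  have hg₀ : 0 < x i₀ / μ i₀ - 1 := hgpos i₀ hi₀
  have ht : 0 < (∑ i ∈ Sstar, (x i - μ i)) / (∑ i ∈ Sstar, μ i) := div_pos ha hb
  have ht2 : (∑ i ∈ Sstar, (x i - μ i)) / (∑ i ∈ Sstar, μ i) < 2 * (x i₀ / μ i₀ - 1) := by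
    rw [div_lt_iff₀ hb]
    have hterm : ∀ j ∈ Sstar, x j - μ j < μ j * (2 * (x i₀ / μ i₀ - 1)) := by
      intro j hj
      rw [hxg j]
      refine mul_lt_mul_of_pos_left ?_ (hμ j)
      by_cases hjST : j ∈ ST
      · exact hhom j hjST i₀ hi₀
      · have h1 := hstrong i₀ hi₀ j hjST
        linarith
    calc (∑ i ∈ Sstar, (x i - μ i)) < ∑ j ∈ Sstar, μ j * (2 * (x i₀ / μ i₀ - 1)) :=
          Finset.sum_lt_sum_of_nonempty hSne hterm
      _ = 2 * (x i₀ / μ i₀ - 1) * ∑ i ∈ Sstar, μ i := by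
          rw [← Finset.sum_mul]; ring
  -- value of the enlarged set at the optimal q for Sstar
  set a := ∑ i ∈ Sstar, (x i - μ i) with hadef
  set b := ∑ i ∈ Sstar, μ i with hbdef
  have hmemT : a ^ 2 / (2 * b) +
      μ i₀ * ((x i₀ / μ i₀ - 1) * (a / b) - (a / b) ^ 2 / 2) ∈
      {y : ℝ | ∃ q : ℝ, 1 < q ∧
        y = ∑ i ∈ insert i₀ Sstar, ((x i - μ i) * (q - 1) - μ i * (q - 1) ^ 2 / 2)} := by
    refine ⟨1 + a / b, by linarith, ?_⟩
    rw [hsplit, Finset.sum_insert hnot, Finset.sum_insert hnot, hxg i₀]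
    exact aux2 _ _ _ _ hb.ne'
  have hFT : a ^ 2 / (2 * b) +
      μ i₀ * ((x i₀ / μ i₀ - 1) * (a / b) - (a / b) ^ 2 / 2) ≤ F (insert i₀ Sstar) := by
    rw [hF]
    exact le_csSup (hbdd _ (hBpos _ ⟨i₀, Finset.mem_insert_self _ _⟩)) hmemT
  have hpos : 0 < μ i₀ * ((x i₀ / μ i₀ - 1) * (a / b) - (a / b) ^ 2 / 2) := by
    refine mul_pos (hμ i₀) ?_
    nlinarith [mul_pos ht (by linarith : (0:ℝ) < 2 * (x i₀ / μ i₀ - 1) - a / b)]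
  have hub' : F Sstar ≤ a ^ 2 / (2 * b) := hub Sstar hb
  have := hmax (insert i₀ Sstar)
  linarith
end
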